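/- arXiv:2405.07000 — 2 statements merged into one kernel-verified Lean document; each statement's English description precedes it below -/
import Mathlib

section
/- Let A be a Noetherian ring and U a subset of Spec(A). Then U is open if and only if: (i) for every prime q in U, U contains a nonempty open subset of V(q); and (ii) for all primes p, q with p in U and p ⊇ q, also q is in U. -/
open TopologicalSpace Set

/-- **Topological Nagata criterion for openness.**
Let `A` be a Noetherian ring and `U` a subset of `Spec A`.  Then `U` is open if and only if:
(i) for every prime `q ∈ U`, `U` contains a nonempty subset of `V(q)` which is open in `V(q)`;
(ii) for all primes `p, q` with `p ∈ U` and `p ⊇ q`, also `q ∈ U`. -/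
theorem nagata_criterion_openness (A : Type*) [CommRing A] [IsNoetherianRing A]
    (U : Set (PrimeSpectrum A)) :
    IsOpen U ↔
      ((∀ q ∈ U, ∃ W : Set (PrimeSpectrum A), IsOpen W ∧
          (W ∩ PrimeSpectrum.zeroLocus (q.asIdeal : Set A)).Nonempty ∧
          W ∩ PrimeSpectrum.zeroLocus (q.asIdeal : Set A) ⊆ U) ∧
        (∀ p q : PrimeSpectrum A, p ∈ U → q.asIdeal ≤ p.asIdeal → q ∈ U)) := by
  constructor
  · intro hU
    refine ⟨fun q hq => ⟨U, hU, ⟨q, hq, (PrimeSpectrum.mem_zeroLocus _ _).mpr le_rfl⟩,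
      Set.inter_subset_left⟩, fun p q hp hle => ?_⟩
    exact ((PrimeSpectrum.le_iff_specializes q p).mp hle).mem_open hU hp
  · rintro ⟨h1, h2⟩
    have main : ∀ z : Closeds (PrimeSpectrum A),
        ∃ V : Set (PrimeSpectrum A), IsOpen V ∧ U ∩ (z : Set (PrimeSpectrum A)) = V ∩ z := by
      intro z
      refine WellFounded.induction (C := fun z : Closeds (PrimeSpectrum A) =>
          ∃ V : Set (PrimeSpectrum A), IsOpen V ∧ U ∩ (z : Set (PrimeSpectrum A)) = V ∩ z)
        wellFounded_lt z ?_
      clear z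
      intro z IH
      rcases Set.eq_empty_or_nonempty (U ∩ (z : Set (PrimeSpectrum A))) with he | hne
      · exact ⟨∅, isOpen_empty, by rw [he, Set.empty_inter]⟩
      by_cases hirr : IsIrreducible (z : Set (PrimeSpectrum A))
      · -- irreducible case
        set q := hirr.genericPoint with hqdef
        have hq : closure ({q} : Set (PrimeSpectrum A)) = (z : Set (PrimeSpectrum A)) :=
          hirr.closure_genericPoint z.isClosed
        have hzV : PrimeSpectrum.zeroLocus (q.asIdeal : Set A) = (z : Set (PrimeSpectrum A)) := by
          rw [← PrimeSpectrum.vanishingIdeal_singleton,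
            PrimeSpectrum.zeroLocus_vanishingIdeal_eq_closure, hq]
        obtain ⟨p, hpU, hpz⟩ := hne
        have hqU : q ∈ U := by
          refine h2 p q hpU ?_
          have : q ⤳ p := by rw [specializes_iff_mem_closure, hq]; exact hpz
          exact (PrimeSpectrum.le_iff_specializes q p).mpr this
        obtain ⟨W, hW, ⟨x, hx⟩, hWU⟩ := h1 q hqU
        rw [hzV] at hx hWU
        have hz' : IsClosed ((z : Set (PrimeSpectrum A)) \ W) := z.isClosed.sdiff hW
        have hlt : (⟨_, hz'⟩ : Closeds (PrimeSpectrum A)) < z := by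
          refine lt_of_le_of_ne (fun y hy => hy.1) (fun hEq => ?_)
          have hx2 : x ∈ z := hx.2
          rw [← hEq] at hx2
          exact (show x ∈ (z : Set (PrimeSpectrum A)) \ W from hx2).2 hx.1
        obtain ⟨V', hV', hV'eq⟩ := IH _ hlt
        simp only [Closeds.coe_mk] at hV'eq
        refine ⟨W ∪ V', hW.union hV', ?_⟩
        ext y
        constructor
        · rintro ⟨hyU, hyz⟩
          by_cases hyW : y ∈ W
          · exact ⟨Or.inl hyW, hyz⟩
          · have : y ∈ V' ∩ ((z : Set (PrimeSpectrum A)) \ W) := by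
              rw [← hV'eq]; exact ⟨hyU, hyz, hyW⟩
            exact ⟨Or.inr this.1, hyz⟩
        · rintro ⟨hyV, hyz⟩
          refine ⟨?_, hyz⟩
          rcases hyV with hyW | hyV'
          · exact hWU ⟨hyW, hyz⟩
          · by_cases hyW : y ∈ W
            · exact hWU ⟨hyW, hyz⟩
            · have : y ∈ U ∩ ((z : Set (PrimeSpectrum A)) \ W) := by
                rw [hV'eq]; exact ⟨hyV', hyz, hyW⟩
              exact this.1
      · -- reducible case
        have hzne : (z : Set (PrimeSpectrum A)).Nonempty := ⟨hne.choose, hne.choose_spec.2⟩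
        rw [IsIrreducible, not_and] at hirr
        have hpre := hirr hzne
        rw [IsPreirreducible] at hpre
        push_neg at hpre
        obtain ⟨u, v, hu, hv, hzu, hzv, hzuv⟩ := hpre
        have hc1 : IsClosed ((z : Set (PrimeSpectrum A)) \ u) := z.isClosed.sdiff hu
        have hc2 : IsClosed ((z : Set (PrimeSpectrum A)) \ v) := z.isClosed.sdiff hv
        have hcover : ∀ y ∈ (z : Set (PrimeSpectrum A)),
            y ∈ (z : Set (PrimeSpectrum A)) \ u ∨ y ∈ (z : Set (PrimeSpectrum A)) \ v := by
          intro y hy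
          by_cases hyu : y ∈ u
          · refine Or.inr ⟨hy, fun hyv => ?_⟩
            have hmem : y ∈ (z : Set (PrimeSpectrum A)) ∩ (u ∩ v) := ⟨hy, hyu, hyv⟩
            rw [hzuv] at hmem
            exact hmem
          · exact Or.inl ⟨hy, hyu⟩
        have hlt1 : (⟨_, hc1⟩ : Closeds (PrimeSpectrum A)) < z := by
          obtain ⟨x, hxz, hxu⟩ := hzu
          refine lt_of_le_of_ne (fun y hy => hy.1) (fun hEq => ?_)
          have hx2 : x ∈ z := hxz
          rw [← hEq] at hx2
          exact (show x ∈ (z : Set (PrimeSpectrum A)) \ u from hx2).2 hxu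
        have hlt2 : (⟨_, hc2⟩ : Closeds (PrimeSpectrum A)) < z := by
          obtain ⟨x, hxz, hxv⟩ := hzv
          refine lt_of_le_of_ne (fun y hy => hy.1) (fun hEq => ?_)
          have hx2 : x ∈ z := hxz
          rw [← hEq] at hx2
          exact (show x ∈ (z : Set (PrimeSpectrum A)) \ v from hx2).2 hxv
        obtain ⟨V₁, hV₁, hV₁eq⟩ := IH _ hlt1
        simp only [Closeds.coe_mk] at hV₁eq
        obtain ⟨V₂, hV₂, hV₂eq⟩ := IH _ hlt2
        simp only [Closeds.coe_mk] at hV₂eq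
        refine ⟨(V₁ ∩ ((z : Set (PrimeSpectrum A)) \ v)ᶜ) ∪
          (V₂ ∩ ((z : Set (PrimeSpectrum A)) \ u)ᶜ) ∪ (V₁ ∩ V₂),
          ((hV₁.inter hc2.isOpen_compl).union (hV₂.inter hc1.isOpen_compl)).union
            (hV₁.inter hV₂), ?_⟩
        have m1 : ∀ y, y ∈ (z : Set (PrimeSpectrum A)) \ u → (y ∈ U ↔ y ∈ V₁) := by
          intro y hy
          constructor
          · intro hyU
            have : y ∈ V₁ ∩ ((z : Set (PrimeSpectrum A)) \ u) := by
              rw [← hV₁eq]; exact ⟨hyU, hy⟩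
            exact this.1
          · intro hyV
            have : y ∈ U ∩ ((z : Set (PrimeSpectrum A)) \ u) := by
              rw [hV₁eq]; exact ⟨hyV, hy⟩
            exact this.1
        have m2 : ∀ y, y ∈ (z : Set (PrimeSpectrum A)) \ v → (y ∈ U ↔ y ∈ V₂) := by
          intro y hy
          constructor
          · intro hyU
            have : y ∈ V₂ ∩ ((z : Set (PrimeSpectrum A)) \ v) := by
              rw [← hV₂eq]; exact ⟨hyU, hy⟩
            exact this.1
          · intro hyV
            have : y ∈ U ∩ ((z : Set (PrimeSpectrum A)) \ v) := by
              rw [hV₂eq]; exact ⟨hyV, hy⟩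
            exact this.1
        ext y
        constructor
        · rintro ⟨hyU, hyz⟩
          refine ⟨?_, hyz⟩
          rcases hcover y hyz with h1' | h2'
          · by_cases hy2 : y ∈ (z : Set (PrimeSpectrum A)) \ v
            · exact Or.inr ⟨(m1 y h1').mp hyU, (m2 y hy2).mp hyU⟩
            · exact Or.inl (Or.inl ⟨(m1 y h1').mp hyU, hy2⟩)
          · by_cases hy1 : y ∈ (z : Set (PrimeSpectrum A)) \ u
            · exact Or.inr ⟨(m1 y hy1).mp hyU, (m2 y h2').mp hyU⟩
            · exact Or.inl (Or.inr ⟨(m2 y h2').mp hyU, hy1⟩)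
        · rintro ⟨hyV, hyz⟩
          refine ⟨?_, hyz⟩
          rcases hyV with (⟨hyV₁, hyc⟩ | ⟨hyV₂, hyc⟩) | ⟨hyV₁, hyV₂⟩
          · have h1' : y ∈ (z : Set (PrimeSpectrum A)) \ u := (hcover y hyz).resolve_right hyc
            exact (m1 y h1').mpr hyV₁
          · have h2' : y ∈ (z : Set (PrimeSpectrum A)) \ v := (hcover y hyz).resolve_left hyc
            exact (m2 y h2').mpr hyV₂
          · rcases hcover y hyz with h1' | h2'
            · exact (m1 y h1').mpr hyV₁
            · exact (m2 y h2').mpr hyV₂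
    obtain ⟨V, hV, hVeq⟩ := main ⟨Set.univ, isClosed_univ⟩
    have : U = V := by
      have := hVeq
      simpa [Set.inter_univ] using this
    rw [this]
    exact hV
end

section
/- Let (R, m, κ) be a Noetherian local ring with κ infinite, I = (f_1,...,f_m) a proper ideal, P = Proj(Rees(I)) the blowup of Spec(R) along I with projection π, and E the exceptional divisor. For a general element g = a_1 f_1 + ... + a_m f_m of I with associated linear form ℓ = a_1 y_1 + ... + a_m y_m in the Rees algebra, the pullback π*V(g) and the hyperplane H = V_+(ℓ) are effective Cartier divisors on P, and π*V(g) = E + H as divisors. -/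
set_option synthInstance.maxHeartbeats 1000000
set_option maxHeartbeats 1000000

open IsLocalRing

section Aux

variable {R : Type*} [CommRing R] [IsNoetherianRing R] [IsLocalRing R] {m : ℕ}

lemma aux_exists_dual (Z : Submodule R (Fin m → R)) (hZ : Z ≠ ⊤) :
    ∃ φ : Module.Dual (ResidueField R) (Fin m → ResidueField R),
      (∃ v, φ v ≠ 0) ∧ ∀ a : Fin m → R, a ∈ Z → φ (fun k => residue R (a k)) = 0 := by
  classical
  let W : Submodule (ResidueField R) (Fin m → ResidueField R) :=
    { carrier := (fun (a : Fin m → R) (k : Fin m) => residue R (a k)) '' (Z : Set (Fin m → R))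
      add_mem' := by
        rintro x y ⟨a, ha, rfl⟩ ⟨b, hb, rfl⟩
        exact ⟨a + b, Z.add_mem ha hb, by funext k; simp⟩
      zero_mem' := ⟨0, Z.zero_mem, by funext k; simp⟩
      smul_mem' := by
        rintro c x ⟨a, ha, rfl⟩
        obtain ⟨r, rfl⟩ := residue_surjective (R := R) c
        exact ⟨r • a, Z.smul_mem r ha, by funext k; simp [smul_eq_mul]⟩ }
  have hW : W ≠ ⊤ := by
    intro htop
    apply hZ
    rw [eq_top_iff]
    refine Submodule.le_of_le_smul_of_le_jacobson_bot (I := maximalIdeal R)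
      (Module.finite_def.mp inferInstance)
      (IsLocalRing.jacobson_eq_maximalIdeal ⊥ bot_ne_top).ge ?_
    intro x _
    have hx : (fun k => residue R (x k)) ∈ W := htop ▸ Submodule.mem_top
    obtain ⟨a, ha, heq⟩ := hx
    have hsub : ∀ k, x k - a k ∈ maximalIdeal R := by
      intro k
      have h1 : residue R (a k) = residue R (x k) := congrFun heq k
      have h2 : residue R (x k - a k) = 0 := by rw [map_sub, h1, sub_self]
      exact Ideal.Quotient.eq_zero_iff_mem.mp h2
    have hxa : x - a ∈ (maximalIdeal R) • (⊤ : Submodule R (Fin m → R)) := by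
      have hrepr : (x - a) = ∑ k, Pi.single k ((x - a) k) :=
        (Finset.univ_sum_single (x - a)).symm
      rw [hrepr]
      refine Submodule.sum_mem _ fun k _ => ?_
      have hsingle : Pi.single k ((x - a) k) =
          ((x - a) k) • (Pi.single k (1 : R) : Fin m → R) := by
        have h := Pi.single_smul' k ((x - a) k) (1 : R)
        rwa [smul_eq_mul, mul_one] at h
      rw [hsingle]
      exact Submodule.smul_mem_smul (hsub k) Submodule.mem_top
    have hx' : x = a + (x - a) := by ring
    rw [hx']
    exact Submodule.add_mem _ (Submodule.mem_sup_left ha) (Submodule.mem_sup_right hxa)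
  obtain ⟨v, hv⟩ : ∃ v, v ∉ W := by
    by_contra h; push_neg at h; exact hW (Submodule.eq_top_iff'.mpr h)
  have hv0 : (Submodule.Quotient.mk v : (Fin m → ResidueField R) ⧸ W) ≠ 0 := by
    rwa [ne_eq, Submodule.Quotient.mk_eq_zero]
  obtain ⟨ψ, hψ⟩ : ∃ ψ : Module.Dual (ResidueField R) ((Fin m → ResidueField R) ⧸ W),
      ψ (Submodule.Quotient.mk v) ≠ 0 := by
    by_contra h; push_neg at h
    exact hv0 ((Module.forall_dual_apply_eq_zero_iff (ResidueField R) _).mp h)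
  refine ⟨ψ.comp W.mkQ, ⟨v, ?_⟩, ?_⟩
  · simpa using hψ
  · intro a ha
    have hmem : (fun k => residue R (a k)) ∈ W := ⟨a, ha, rfl⟩
    have h0 : W.mkQ (fun k => residue R (a k)) = 0 :=
      (Submodule.Quotient.mk_eq_zero W).mpr hmem
    simp [LinearMap.comp_apply, h0]

lemma aux_exists_poly (Z : Submodule R (Fin m → R)) (hZ : Z ≠ ⊤) :
    ∃ F : MvPolynomial (Fin m) (ResidueField R), F ≠ 0 ∧
      ∀ a : Fin m → R, MvPolynomial.eval (fun k => residue R (a k)) F ≠ 0 → a ∉ Z := by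
  classical
  obtain ⟨φ, ⟨v, hv⟩, hvan⟩ := aux_exists_dual Z hZ
  set F : MvPolynomial (Fin m) (ResidueField R) :=
    ∑ k, MvPolynomial.C (φ (Pi.single k 1)) * MvPolynomial.X k with hF
  have heval : ∀ w : Fin m → ResidueField R, MvPolynomial.eval w F = φ w := by
    intro w
    have hw : w = ∑ k, w k • (Pi.single k (1 : ResidueField R) : Fin m → ResidueField R) := by
      funext j
      simp [Finset.sum_apply, Pi.single_apply, mul_ite, mul_one, mul_zero, smul_eq_mul]
    have h1 : MvPolynomial.eval w F = ∑ k, φ (Pi.single k 1) * w k := by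
      simp [hF]
    have h2 : φ w = ∑ k, w k • φ (Pi.single k (1 : ResidueField R)) := by
      conv_lhs => rw [hw]
      rw [map_sum]
      simp
    rw [h1, h2]
    refine Finset.sum_congr rfl fun k _ => ?_
    rw [smul_eq_mul, mul_comm]
  refine ⟨F, ?_, ?_⟩
  · intro h
    apply hv
    rw [← heval v, h, map_zero]
  · intro a ha haZ
    exact ha (by rw [heval]; exact hvan a haZ)

lemma aux_combine {ι : Type*} (s : Finset ι) (P : ι → (Fin m → R) → Prop)
    (h : ∀ q ∈ s, ∃ F : MvPolynomial (Fin m) (ResidueField R), F ≠ 0 ∧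
      ∀ a : Fin m → R, MvPolynomial.eval (fun k => residue R (a k)) F ≠ 0 → P q a) :
    ∃ F : MvPolynomial (Fin m) (ResidueField R), F ≠ 0 ∧
      ∀ a : Fin m → R, MvPolynomial.eval (fun k => residue R (a k)) F ≠ 0 →
        ∀ q ∈ s, P q a := by
  classical
  choose F hF0 hFP using h
  refine ⟨∏ q ∈ s.attach, F q.1 q.2, ?_, ?_⟩
  · rw [Finset.prod_ne_zero_iff]
    exact fun q _ => hF0 q.1 q.2
  · intro a ha q hq
    rw [map_prod, Finset.prod_ne_zero_iff] at ha
    exact hFP q hq a (ha ⟨q, hq⟩ (Finset.mem_attach _ _))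

lemma aux_chart_poly (f : Fin m → R) (i : Fin m) (A : Type*) [CommRing A] [Algebra R A]
    [IsNoetherianRing A] (hreg : algebraMap R A (f i) ∈ nonZeroDivisors A) :
    ∃ F : MvPolynomial (Fin m) (ResidueField R), F ≠ 0 ∧
      ∀ a : Fin m → R, MvPolynomial.eval (fun k => residue R (a k)) F ≠ 0 →
        algebraMap R A (∑ k, a k * f k) ∈ nonZeroDivisors A := by
  classical
  obtain ⟨t, htinf, htprim, -, htmin⟩ := Ideal.IsLasker.minimal (Ideal.isLasker A A) ⊥
  have hrad : ∀ Q ∈ t, algebraMap R A (f i) ∉ Ideal.radical Q := by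
    intro Q hQ hmem
    obtain ⟨x, hx1, hx2⟩ := SetLike.not_le_iff_exists.mp (htmin hQ)
    obtain ⟨n, hn⟩ := hmem
    have hzero : x * (algebraMap R A (f i)) ^ n = 0 := by
      have hmem' : x * (algebraMap R A (f i)) ^ n ∈ t.inf id := by
        rw [Submodule.mem_finsetInf]
        intro J hJ
        rcases eq_or_ne J Q with rfl | hne
        · exact Ideal.mul_mem_left _ _ hn
        · exact Ideal.mul_mem_right _ _
            ((Finset.inf_le (Finset.mem_erase.mpr ⟨hne, hJ⟩) :
              (t.erase Q).inf id ≤ id J) hx1)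
      rw [htinf] at hmem'
      exact (Submodule.mem_bot A).mp hmem'
    have hx0 : x = 0 := mem_nonZeroDivisors_iff_right.mp (pow_mem hreg n) x hzero
    exact hx2 (hx0 ▸ Q.zero_mem)
  have key : ∀ Q ∈ t, ∃ F : MvPolynomial (Fin m) (ResidueField R), F ≠ 0 ∧
      ∀ a : Fin m → R, MvPolynomial.eval (fun k => residue R (a k)) F ≠ 0 →
        algebraMap R A (∑ k, a k * f k) ∉ Ideal.radical Q := by
    intro Q hQ
    set Z : Submodule R (Fin m → R) :=
      { carrier := {a : Fin m → R | algebraMap R A (∑ k, a k * f k) ∈ Ideal.radical Q}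
        add_mem' := by
          intro a b ha hb
          have hsum : (∑ k, (a + b) k * f k) = (∑ k, a k * f k) + (∑ k, b k * f k) := by
            rw [← Finset.sum_add_distrib]
            exact Finset.sum_congr rfl fun k _ => by simp [add_mul]
          simp only [Set.mem_setOf_eq, hsum, map_add]
          exact Ideal.add_mem _ ha hb
        zero_mem' := by simp
        smul_mem' := by
          intro c a ha
          have hsum : (∑ k, (c • a) k * f k) = c * ∑ k, a k * f k := by
            rw [Finset.mul_sum]
            exact Finset.sum_congr rfl fun k _ => by simp [smul_eq_mul, mul_assoc]
          simp only [Set.mem_setOf_eq, hsum, map_mul]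
          exact Ideal.mul_mem_left _ _ ha } with hZdef
    have hZ : Z ≠ ⊤ := by
      intro h
      apply hrad Q hQ
      have hmem : (Pi.single i (1 : R) : Fin m → R) ∈ Z := h ▸ Submodule.mem_top
      have h2 : algebraMap R A (∑ k, (Pi.single i (1 : R) : Fin m → R) k * f k) ∈ Ideal.radical Q :=
        hmem
      have hs : (∑ k, (Pi.single i (1 : R) : Fin m → R) k * f k) = f i := by
        simp [Pi.single_apply]
      rwa [hs] at h2
    obtain ⟨F, hF0, hFa⟩ := aux_exists_poly Z hZ
    exact ⟨F, hF0, fun a ha hmem => hFa a ha hmem⟩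
  obtain ⟨F, hF0, hFa⟩ := aux_combine t _ key
  refine ⟨F, hF0, fun a ha => ?_⟩
  rw [mem_nonZeroDivisors_iff_right]
  intro z hz
  by_contra hz0
  have hzb : z ∉ (⊥ : Ideal A) := fun h => hz0 ((Submodule.mem_bot A).mp h)
  rw [← htinf, Submodule.mem_finsetInf] at hzb
  push_neg at hzb
  obtain ⟨Q, hQ, hzQ⟩ := hzb
  have hprim := Ideal.isPrimary_iff.mp (htprim hQ)
  rcases hprim.2 (show z * algebraMap R A (∑ k, a k * f k) ∈ Q from hz ▸ Q.zero_mem) with h | h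
  · exact hzQ h
  · exact hFa a ha Q hQ h

lemma aux_chart_main (f : Fin m → R) (i : Fin m) :
    ∃ F : MvPolynomial (Fin m) (ResidueField R), F ≠ 0 ∧
      ∀ a : Fin m → R,
        MvPolynomial.eval (fun k => residue R (a k)) F ≠ 0 →
          ∀ C : Subalgebra R (Localization.Away (f i)),
            C = Algebra.adjoin R (Set.range fun j : Fin m =>
              IsLocalization.mk' (Localization.Away (f i)) (f j)
                (⟨f i, Submonoid.mem_powers _⟩ : Submonoid.powers (f i))) →
          ∃ gEl fEl ℓEl : C,
            (gEl : Localization.Away (f i)) =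
              algebraMap R _ (∑ k, a k * f k) ∧
            (fEl : Localization.Away (f i)) = algebraMap R _ (f i) ∧
            (ℓEl : Localization.Away (f i)) =
              ∑ k, algebraMap R _ (a k) *
                IsLocalization.mk' (Localization.Away (f i)) (f k)
                  (⟨f i, Submonoid.mem_powers _⟩ : Submonoid.powers (f i)) ∧
            gEl ∈ nonZeroDivisors C ∧ ℓEl ∈ nonZeroDivisors C ∧
            Ideal.span {gEl} = Ideal.span {fEl} * Ideal.span {ℓEl} := by
  classical
  set s : Set (Localization.Away (f i)) := Set.range fun j : Fin m =>
      IsLocalization.mk' (Localization.Away (f i)) (f j)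
        (⟨f i, Submonoid.mem_powers _⟩ : Submonoid.powers (f i)) with hs
  set D : Subalgebra R (Localization.Away (f i)) := Algebra.adjoin R s with hD
  haveI hNoeth : IsNoetherianRing D :=
    isNoetherianRing_of_fg (Subalgebra.fg_def.mpr ⟨s, Set.finite_range _, rfl⟩)
  have hunit : IsUnit (algebraMap R (Localization.Away (f i)) (f i)) :=
    IsLocalization.Away.algebraMap_isUnit (S := Localization.Away (f i)) (f i)
  have hreg : algebraMap R D (f i) ∈ nonZeroDivisors D := by
    rw [mem_nonZeroDivisors_iff_right]
    intro z hz
    have hz' : (z : Localization.Away (f i)) *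
        algebraMap R (Localization.Away (f i)) (f i) = 0 := by
      have hc := congrArg Subtype.val hz
      simpa using hc
    have hz0 : (z : Localization.Away (f i)) = 0 := by
      rcases hunit.exists_left_inv with ⟨u, hu⟩
      have := congrArg (· * u) hz'
      simp only [zero_mul] at this
      rwa [mul_assoc, mul_comm (algebraMap R (Localization.Away (f i)) (f i)) u, hu,
        mul_one] at this
    exact Subtype.ext hz0
  obtain ⟨F, hF0, hFa⟩ := aux_chart_poly f i D hreg
  refine ⟨F, hF0, ?_⟩
  intro a ha C hC
  subst hC
  have hfmem : ∀ j : Fin m,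
      IsLocalization.mk' (Localization.Away (f i)) (f j)
        (⟨f i, Submonoid.mem_powers _⟩ : Submonoid.powers (f i)) ∈ D :=
    fun j => Algebra.subset_adjoin ⟨j, rfl⟩
  set fEl : D := algebraMap R D (f i) with hfEl
  set mkEl : Fin m → D := fun k =>
    ⟨IsLocalization.mk' (Localization.Away (f i)) (f k)
      (⟨f i, Submonoid.mem_powers _⟩ : Submonoid.powers (f i)), hfmem k⟩ with hmkEl
  set ℓEl : D := ∑ k, algebraMap R D (a k) * mkEl k with hℓEl
  have hℓcoe : (ℓEl : Localization.Away (f i)) =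
      ∑ k, algebraMap R (Localization.Away (f i)) (a k) *
        IsLocalization.mk' (Localization.Away (f i)) (f k)
          (⟨f i, Submonoid.mem_powers _⟩ : Submonoid.powers (f i)) := by
    show (D.subtype ℓEl) = _
    rw [hℓEl, map_sum]
    rfl
  have hgcoe : ((fEl * ℓEl : D) : Localization.Away (f i)) =
      algebraMap R (Localization.Away (f i)) (∑ k, a k * f k) := by
    have h1 : ((fEl * ℓEl : D) : Localization.Away (f i)) =
        algebraMap R (Localization.Away (f i)) (f i) * (ℓEl : Localization.Away (f i)) := rfl
    rw [h1, hℓcoe, Finset.mul_sum, map_sum]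
    refine Finset.sum_congr rfl fun k _ => ?_
    rw [map_mul, ← mul_assoc,
      mul_comm (algebraMap R (Localization.Away (f i)) (f i))
        (algebraMap R (Localization.Away (f i)) (a k)), mul_assoc]
    congr 1
    rw [mul_comm]
    exact IsLocalization.mk'_spec _ _ _
  have hgel : fEl * ℓEl = algebraMap R D (∑ k, a k * f k) := Subtype.ext (by rw [hgcoe]; rfl)
  have hgnzd : fEl * ℓEl ∈ nonZeroDivisors D := by
    rw [hgel]
    exact hFa a ha
  refine ⟨fEl * ℓEl, fEl, ℓEl, hgcoe, rfl, hℓcoe, hgnzd, ?_, ?_⟩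
  · rw [mem_nonZeroDivisors_iff_right]
    intro z hz
    have hzz : z * (fEl * ℓEl) = 0 := by
      rw [mul_comm fEl ℓEl, ← mul_assoc, hz, zero_mul]
    exact mem_nonZeroDivisors_iff_right.mp hgnzd z hzz
  · exact (Ideal.span_singleton_mul_span_singleton fEl ℓEl).symm

end Aux

set_option synthInstance.maxHeartbeats 1000000 in
/-- **`π*D = E + H` on the blowup.**  Let `(R, 𝔪, κ)` be a Noetherian local ring with `κ`
infinite, `I = (f_1, …, f_m)` a proper ideal, and `P = Proj(Rees I)` the blowup of `Spec R`
along `I`, covered by the charts `U_i = Spec R[I/f_i]` (where `R[I/f_i] ⊆ R_{f_i}` is generated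
by the elements `f_j/f_i`).  For a general element `g = a_1 f_1 + ⋯ + a_m f_m` of `I`, with
associated hyperplane `H = V_+(a_1 y_1 + ⋯ + a_m y_m)`, the pullback `π*V(g)` and `H` are
effective Cartier divisors on `P` and `π*V(g) = E + H`, where `E` is the exceptional divisor:
on each chart `U_i`, the local equation `g` of `π*V(g)` and the local equation
`ℓ/f_i = ∑ a_j (f_j/f_i)` of `H` are nonzerodivisors of `R[I/f_i]`, and the principal ideal
`(g)` equals the product of the ideals `(f_i)` (the local equation of `E`) and `(ℓ/f_i)`. -/
theorem pullback_eq_exceptional_add_hyperplane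
    {R : Type*} [CommRing R] [IsNoetherianRing R] [IsLocalRing R]
    [Infinite (IsLocalRing.ResidueField R)]
    {m : ℕ} (f : Fin m → R) (hproper : Ideal.span (Set.range f) ≠ ⊤) :
    ∃ F : MvPolynomial (Fin m) (IsLocalRing.ResidueField R), F ≠ 0 ∧
      ∀ a : Fin m → R,
        MvPolynomial.eval (fun k => IsLocalRing.residue R (a k)) F ≠ 0 →
        ∀ i : Fin m,
          -- the chart ring `C = R[I/f_i] ⊆ R_{f_i}`
          ∀ C : Subalgebra R (Localization.Away (f i)),
            C = Algebra.adjoin R (Set.range fun j : Fin m =>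
              IsLocalization.mk' (Localization.Away (f i)) (f j)
                (⟨f i, Submonoid.mem_powers _⟩ : Submonoid.powers (f i))) →
          ∃ gEl fEl ℓEl : C,
            -- `gEl` is the local equation of `π*V(g)`
            (gEl : Localization.Away (f i)) =
              algebraMap R _ (∑ k, a k * f k) ∧
            -- `fEl` is the local equation of the exceptional divisor `E`
            (fEl : Localization.Away (f i)) = algebraMap R _ (f i) ∧
            -- `ℓEl` is the local equation of the hyperplane `H`
            (ℓEl : Localization.Away (f i)) =
              ∑ k, algebraMap R _ (a k) *
                IsLocalization.mk' (Localization.Away (f i)) (f k)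
                  (⟨f i, Submonoid.mem_powers _⟩ : Submonoid.powers (f i)) ∧
            -- `π*V(g)` and `H` are effective Cartier divisors
            gEl ∈ nonZeroDivisors C ∧ ℓEl ∈ nonZeroDivisors C ∧
            -- `π*V(g) = E + H`
            Ideal.span {gEl} = Ideal.span {fEl} * Ideal.span {ℓEl} := by
  classical
  choose c hc0 hca using fun i : Fin m => aux_chart_main f i
  refine ⟨∏ i, c i, ?_, ?_⟩
  · rw [Finset.prod_ne_zero_iff]
    exact fun i _ => hc0 i
  · intro a ha i
    rw [map_prod, Finset.prod_ne_zero_iff] at ha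
    exact hca i a (ha i (Finset.mem_univ i))
end
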